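/- arXiv:2008.08575 — 3 statements merged into one kernel-verified Lean document; each statement's English description precedes it below -/
import Mathlib

section
/- Let G be a simple graph with minimum degree δ and minimum cut value λ < δ (so λ ≤ δ). Let X' ⊆ V be a set such that every vertex v ∈ X' satisfies |E(v, X')| ≥ 2·deg(v)/5, and let (C, V\C) be a minimum cut with min{|X'∩C|, |X'\C|} ≤ λ/40. Then min{|X'∩C|, |X'\C|} ≤ 2. -/
open Finset

variable {V : Type*} [Fintype V] [DecidableEq V]

/-- Number of ordered adjacencies from `A` to `B`; for disjoint `A B` this is `|E(A,B)|`. -/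
def eBtw (G : SimpleGraph V) [DecidableRel G.Adj] (A B : Finset V) : ℕ :=
  ∑ a ∈ A, (B.filter (G.Adj a)).card

/-- `|E(v,S)|`: number of edges from `v` to `S`. -/
def eV (G : SimpleGraph V) [DecidableRel G.Adj] (v : V) (S : Finset V) : ℕ :=
  (S.filter (G.Adj v)).card

/-- Volume `vol_G(S)`. -/
def vol (G : SimpleGraph V) [DecidableRel G.Adj] (S : Finset V) : ℕ :=
  ∑ v ∈ S, G.degree v

/-- Value of the cut `(C, V \ C)`. -/
def cutVal (G : SimpleGraph V) [DecidableRel G.Adj] (C : Finset V) : ℕ :=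
  eBtw G C Cᶜ

/-- `(C, V \ C)` is a minimum cut. -/
def IsMinCut (G : SimpleGraph V) [DecidableRel G.Adj] (C : Finset V) : Prop :=
  C.Nonempty ∧ Cᶜ.Nonempty ∧
    ∀ D : Finset V, D.Nonempty → Dᶜ.Nonempty → cutVal G C ≤ cutVal G D

/-- `|E(A,A)|`: number of edges with both endpoints in `A`. -/
def inEdges (G : SimpleGraph V) [DecidableRel G.Adj] (A : Finset V) : ℕ :=
  (G.edgeFinset.filter (fun e => ∀ v ∈ e, v ∈ A)).card

set_option linter.unusedSectionVars false

lemma eBtw_symm (G : SimpleGraph V) [DecidableRel G.Adj] (A B : Finset V) :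
    eBtw G A B = eBtw G B A := by
  unfold eBtw
  simp only [card_filter]
  rw [Finset.sum_comm]
  apply Finset.sum_congr rfl; intro b _
  apply Finset.sum_congr rfl; intro a _
  simp [G.adj_comm]

lemma eBtw_mono (G : SimpleGraph V) [DecidableRel G.Adj] {A A' B B' : Finset V}
    (hA : A ⊆ A') (hB : B ⊆ B') : eBtw G A B ≤ eBtw G A' B' := by
  unfold eBtw
  refine le_trans (Finset.sum_le_sum fun a _ => Finset.card_le_card
    (filter_subset_filter _ hB)) ?_
  exact Finset.sum_le_sum_of_subset hA

lemma key (G : SimpleGraph V) [DecidableRel G.Adj] (δ lam : ℕ)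
    (hδ : δ = G.minDegree) (hlamδ : lam < δ)
    (X' S : Finset V) (hS : S ⊆ X')
    (hX' : ∀ v ∈ X', 2 * (G.degree v : ℝ) / 5 ≤ (eV G v X' : ℝ))
    (hcut : eBtw G S (X' \ S) ≤ lam)
    (hsmall : (S.card : ℝ) ≤ (lam : ℝ) / 40) :
    S.card ≤ 2 := by
  by_contra h
  push_neg at h
  have hm : (3 : ℝ) ≤ S.card := by exact_mod_cast h
  -- lower bound on eBtw G S X'
  have h1 : (2 : ℝ) * δ / 5 * S.card ≤ (eBtw G S X' : ℝ) := by
    have hb : ∀ a ∈ S, (2:ℝ)*δ/5 ≤ ((X'.filter (G.Adj a)).card : ℝ) := by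
      intro a ha
      have hd : (δ:ℝ) ≤ G.degree a := by
        exact_mod_cast hδ ▸ G.minDegree_le_degree a
      have h7 := hX' a (hS ha)
      unfold eV at h7
      linarith
    unfold eBtw
    push_cast
    calc (2:ℝ)*δ/5 * S.card = ∑ _a ∈ S, (2:ℝ)*δ/5 := by rw [Finset.sum_const]; ring
      _ ≤ _ := Finset.sum_le_sum hb
  -- split
  have h2 : eBtw G S X' = eBtw G S S + eBtw G S (X' \ S) := by
    unfold eBtw
    rw [← Finset.sum_add_distrib]
    apply Finset.sum_congr rfl; intro a _
    rw [← Finset.card_union_of_disjoint, ← Finset.filter_union,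
      Finset.union_sdiff_of_subset hS]
    exact Finset.disjoint_filter_filter (Finset.disjoint_sdiff)
  have h3 : eBtw G S S ≤ S.card * S.card := by
    unfold eBtw
    calc ∑ a ∈ S, (S.filter (G.Adj a)).card ≤ ∑ a ∈ S, S.card :=
          Finset.sum_le_sum fun a _ => Finset.card_le_card (filter_subset _ _)
      _ = S.card * S.card := by rw [Finset.sum_const, smul_eq_mul]
  have hδr : (lam : ℝ) + 1 ≤ δ := by exact_mod_cast hlamδ
  have h2r : (eBtw G S X' : ℝ) ≤ (S.card : ℝ) * S.card + lam := by
    have := h3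
    have h4 : (eBtw G S X' : ℝ) = eBtw G S S + eBtw G S (X' \ S) := by exact_mod_cast h2
    have h5 : (eBtw G S S : ℝ) ≤ (S.card : ℝ) * S.card := by exact_mod_cast h3
    have h6 : (eBtw G S (X' \ S) : ℝ) ≤ lam := by exact_mod_cast hcut
    linarith
  have hlam0 : (0:ℝ) ≤ lam := by positivity
  nlinarith [h1, h2r, hsmall, hm, hδr]


theorem stmt1 (G : SimpleGraph V) [DecidableRel G.Adj] (δ : ℕ)
    (hδ : δ = G.minDegree)
    (C : Finset V) (hC : IsMinCut G C)
    (lam : ℕ) (hlam : lam = cutVal G C) (hlamδ : lam < δ)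
    (X' : Finset V)
    (hX' : ∀ v ∈ X', 2 * (G.degree v : ℝ) / 5 ≤ (eV G v X' : ℝ))
    (hsmall : (min ((X' ∩ C).card) ((X' \ C).card) : ℝ) ≤ (lam : ℝ) / 40) :
    min ((X' ∩ C).card) ((X' \ C).card) ≤ 2 := by
  have hlam' : lam = eBtw G C Cᶜ := hlam
  rcases le_total ((X' ∩ C).card) ((X' \ C).card) with hle | hle
  · have hler : ((X' ∩ C).card : ℝ) ≤ ((X' \ C).card : ℝ) := by exact_mod_cast hle
    rw [min_eq_left hler] at hsmall
    rw [min_eq_left hle]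
    refine key G δ lam hδ hlamδ X' (X' ∩ C) Finset.inter_subset_left hX' ?_ (by exact_mod_cast hsmall)
    rw [Finset.sdiff_inter_self_left]
    calc eBtw G (X' ∩ C) (X' \ C) ≤ eBtw G C Cᶜ := by
            refine eBtw_mono G Finset.inter_subset_right fun v hv => ?_
            simp only [Finset.mem_sdiff] at hv
            simpa using hv.2
      _ = lam := hlam'.symm
  · have hler : ((X' \ C).card : ℝ) ≤ ((X' ∩ C).card : ℝ) := by exact_mod_cast hle
    rw [min_eq_right hler] at hsmall
    rw [min_eq_right hle]
    refine key G δ lam hδ hlamδ X' (X' \ C) Finset.sdiff_subset hX' ?_ (by exact_mod_cast hsmall)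
    rw [Finset.sdiff_sdiff_self_left]
    calc eBtw G (X' \ C) (X' ∩ C) ≤ eBtw G Cᶜ C := by
            refine eBtw_mono G (fun v hv => ?_) Finset.inter_subset_right
            simp only [Finset.mem_sdiff] at hv
            simpa using hv.2
      _ = lam := by rw [eBtw_symm]; exact hlam'.symm
end

section
/- Let G be a graph and X ⊆ V, and let X' = trim(X) be obtained by iteratively removing vertices v with |E(v, current set)| < 2deg(v)/5. Then the total number of edges incident to removed vertices that lie inside the current set at removal time (the 'trimmed edges') is at most 4·|E(X, V\X)|. -/
open Finset

variable {V : Type*} [Fintype V] [DecidableEq V]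

set_option linter.unusedSectionVars false
set_option linter.unusedVariables false

lemma filter_univ_adj (G : SimpleGraph V) [DecidableRel G.Adj] (a : V) :
    (univ.filter (G.Adj a)).card = G.degree a := by
  rw [SimpleGraph.degree]
  congr 1
  ext x
  simp [SimpleGraph.mem_neighborFinset]

lemma eBtw_add (G : SimpleGraph V) [DecidableRel G.Adj] (A : Finset V) :
    eBtw G A Aᶜ + ∑ a ∈ A, eV G a A = vol G A := by
  unfold eBtw eV vol
  rw [← Finset.sum_add_distrib]
  refine Finset.sum_congr rfl fun a _ => ?_
  rw [← filter_univ_adj G a, ← Finset.card_union_of_disjoint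
      (Finset.disjoint_filter_filter disjoint_compl_left), ← Finset.filter_union]
  congr 1
  ext x
  simp
  tauto

lemma eV_erase (G : SimpleGraph V) [DecidableRel G.Adj] {S : Finset V} {v : V} (hv : v ∈ S) :
    eV G v (S.erase v) = eV G v S := by
  unfold eV
  rw [Finset.filter_erase]
  rw [Finset.erase_eq_of_notMem]
  simp

lemma W_step (G : SimpleGraph V) [DecidableRel G.Adj] {S : Finset V} {v : V} (hv : v ∈ S) :
    ∑ a ∈ S, eV G a S = (∑ a ∈ S.erase v, eV G a (S.erase v)) + 2 * eV G v S := by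
  rw [← Finset.add_sum_erase _ _ hv]
  have h1 : ∀ a ∈ S.erase v, eV G a S = eV G a (S.erase v) + (if G.Adj a v then 1 else 0) := by
    intro a ha
    unfold eV
    conv_lhs => rw [← Finset.insert_erase hv]
    rw [Finset.filter_insert]
    split
    · rw [Finset.card_insert_of_notMem (by simp)]
    · rfl
  rw [Finset.sum_congr rfl h1, Finset.sum_add_distrib, Finset.sum_boole]
  have h2 : (S.erase v).filter (fun a => G.Adj a v) = (S.erase v).filter (G.Adj v) := by
    apply Finset.filter_congr
    intro x _
    simp [G.adj_comm]
  simp only [h2]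
  have h3 : ((S.erase v).filter (G.Adj v)).card = eV G v S := eV_erase G hv
  simp only [Nat.cast_id, h3]
  ring

lemma cut_step (G : SimpleGraph V) [DecidableRel G.Adj] {S : Finset V} {v : V} (hv : v ∈ S) :
    eBtw G (S \ {v}) (S \ {v})ᶜ + G.degree v = eBtw G S Sᶜ + 2 * eV G v S := by
  have e1 := eBtw_add G S
  have e2 := eBtw_add G (S.erase v)
  have e3 : vol G S = vol G (S.erase v) + G.degree v := by
    unfold vol
    rw [← Finset.add_sum_erase _ _ hv]; ring
  have e4 := W_step G hv
  rw [Finset.sdiff_singleton_eq_erase]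
  omega

theorem stmt5 (G : SimpleGraph V) [DecidableRel G.Adj]
    (X : Finset V) (n : ℕ) (f : ℕ → Finset V) (v : ℕ → V)
    (hf0 : f 0 = X)
    (hstep : ∀ i < n, v i ∈ f i ∧ ((eV G (v i) (f i) : ℝ) < 2 * (G.degree (v i) : ℝ) / 5) ∧
      f (i + 1) = f i \ {v i})
    (hfinal : ∀ w ∈ f n, ¬ ((eV G w (f n) : ℝ) < 2 * (G.degree w : ℝ) / 5)) :
    ∑ i ∈ Finset.range n, eV G (v i) (f i) ≤ 4 * eBtw G X Xᶜ := by
  have h9 : ∀ i < n, 9 * eV G (v i) (f i) ≤ 4 * G.degree (v i) := by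
    intro i hi
    obtain ⟨_, hlt, _⟩ := hstep i hi
    have h5 : ((5 * eV G (v i) (f i) : ℕ) : ℝ) < ((2 * G.degree (v i) : ℕ) : ℝ) := by
      push_cast; linarith
    have h := Nat.cast_lt.mp h5
    omega
  have key : ∀ m ≤ n, eBtw G (f m) (f m)ᶜ + ∑ i ∈ Finset.range m, G.degree (v i)
      = eBtw G X Xᶜ + 2 * ∑ i ∈ Finset.range m, eV G (v i) (f i) := by
    intro m hm
    induction m with
    | zero => simp [hf0]
    | succ k ih =>
      have hk : k < n := hm
      obtain ⟨hv, _, hfs⟩ := hstep k hk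
      have hc := cut_step G hv
      rw [← hfs] at hc
      rw [Finset.sum_range_succ, Finset.sum_range_succ]
      have := ih (le_of_lt hk)
      omega
  have hkey := key n le_rfl
  have hs : 9 * ∑ i ∈ Finset.range n, eV G (v i) (f i)
      ≤ 4 * ∑ i ∈ Finset.range n, G.degree (v i) := by
    rw [Finset.mul_sum, Finset.mul_sum]
    exact Finset.sum_le_sum (fun i hi => h9 i (Finset.mem_range.mp hi))
  omega
end

section
/- Let G be a simple graph with minimum degree δ and suppose all minimum cuts of G are non-trivial, with edge connectivity λ < δ. Let S ⊆ V satisfy: every v ∈ S has |E(v,S)| ≥ 2deg(v)/5, and for some minimum cut (C, V\C), |S∩C| ≤ λ/40 and |S∩C| ≤ |S\C|. Then |S∩C| ≥ 3 leads to a contradiction; specifically, δ ≥ (2/5)δ·|S∩C| − 2|S∩C|² and |S∩C| ≤ λ/40 < δ/30 jointly imply |S∩C| ≤ 2. -/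
open Finset

variable {V : Type*} [Fintype V] [DecidableEq V]

lemma eBtw_self_le (G : SimpleGraph V) [DecidableRel G.Adj] (A : Finset V) :
    eBtw G A A ≤ A.card * A.card := by
  calc eBtw G A A ≤ ∑ _a ∈ A, A.card :=
        Finset.sum_le_sum fun a _ => Finset.card_le_card (Finset.filter_subset _ _)
    _ = A.card * A.card := by rw [Finset.sum_const, smul_eq_mul]

theorem stmt10 (G : SimpleGraph V) [DecidableRel G.Adj]
    (δ : ℕ) (hδ : δ = G.minDegree)
    (hnontriv : ∀ D : Finset V, IsMinCut G D → 2 ≤ D.card ∧ 2 ≤ Dᶜ.card)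
    (C : Finset V) (hC : IsMinCut G C)
    (lam : ℕ) (hlam : lam = cutVal G C) (hlamδ : lam < δ)
    (S : Finset V)
    (hS : ∀ v ∈ S, 2 * (G.degree v : ℝ) / 5 ≤ (eV G v S : ℝ))
    (hsmall : ((S ∩ C).card : ℝ) ≤ (lam : ℝ) / 40)
    (hside : (S ∩ C).card ≤ (S \ C).card) :
    (S ∩ C).card ≤ 2 := by
  by_contra hk
  push_neg at hk
  set A := S ∩ C with hA
  set k := A.card with hkdef
  -- split S into A and S \ C
  have hsplit : ∀ v, eV G v S = eV G v A + eV G v (S \ C) := by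
    intro v
    unfold eV
    rw [← Finset.card_union_of_disjoint, ← Finset.filter_union]
    · congr 1
      ext x
      simp only [hA, Finset.mem_filter, Finset.mem_union, Finset.mem_inter, Finset.mem_sdiff]
      tauto
    · exact Finset.disjoint_filter_filter
        (Finset.disjoint_left.2 fun x hx hx' => (Finset.mem_sdiff.1 hx').2 (Finset.mem_inter.1 hx).2)
  have hsum : ∑ v ∈ A, eV G v S = eBtw G A A + eBtw G A (S \ C) := by
    rw [Finset.sum_congr rfl fun v _ => hsplit v, Finset.sum_add_distrib]
    rfl
  -- cross edges bounded by lam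
  have hcross : eBtw G A (S \ C) ≤ lam := by
    rw [hlam]
    exact eBtw_mono G Finset.inter_subset_right
      (fun x hx => Finset.mem_compl.2 (Finset.mem_sdiff.1 hx).2)
  have hAA : eBtw G A A ≤ k * k := eBtw_self_le G A
  -- lower bound on sum via min degree
  have hdeg : ∀ v ∈ A, 2 * (δ : ℝ) / 5 ≤ (eV G v S : ℝ) := by
    intro v hv
    have h1 : δ ≤ G.degree v := hδ ▸ G.minDegree_le_degree v
    have := hS v (Finset.mem_inter.1 hv).1
    have : 2 * (δ : ℝ) / 5 ≤ 2 * (G.degree v : ℝ) / 5 := by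
      have : (δ : ℝ) ≤ (G.degree v : ℝ) := by exact_mod_cast h1
      linarith
    linarith [hS v (Finset.mem_inter.1 hv).1]
  have hlb : 2 * (δ : ℝ) / 5 * k ≤ (∑ v ∈ A, eV G v S : ℕ) := by
    push_cast
    calc 2 * (δ : ℝ) / 5 * k = ∑ _v ∈ A, 2 * (δ : ℝ) / 5 := by
          rw [Finset.sum_const, nsmul_eq_mul]; ring
      _ ≤ ∑ v ∈ A, (eV G v S : ℝ) := Finset.sum_le_sum hdeg
  have hub : ((∑ v ∈ A, eV G v S : ℕ) : ℝ) ≤ k * k + lam := by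
    rw [hsum]
    push_cast
    have := hAA
    have := hcross
    push_cast
    exact_mod_cast Nat.add_le_add hAA hcross
  have hlamδ' : (lam : ℝ) < (δ : ℝ) := by exact_mod_cast hlamδ
  have hk' : (3 : ℝ) ≤ (k : ℝ) := by exact_mod_cast hk
  nlinarith [hlb, hub, hsmall, hlamδ', hk', mul_le_mul_of_nonneg_left hsmall (le_of_lt (lt_of_le_of_lt (by positivity : (0:ℝ) ≤ lam) (by linarith : (lam:ℝ) < δ)))]
end
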